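/- Let L be a finite modular lattice, let u₁, u₂ ∈ L both have height l, let r ∈ ℕ, and let t ∈ {l−r, l−r+2, …, l+r−2, l+r} (i.e., |t−l| ≤ r and t−l has the same parity as r) with 0 ≤ t ≤ h(1). Then S(u₁,r) ∩ S(u₂,r) = ∅ if and only if S(u₁,r,t) ∩ S(u₂,r,t) = ∅. -/

import Mathlib

/-- The height of an element: the greatest length of chains from `⊥` to `u`. -/
noncomputable def ht {L : Type*} [Preorder L] (u : L) : ℕ := (Order.height u).toNat

/-- An element `z` is a cycle if the interval `[⊥, z]` is a chain. -/
def IsCycle {L : Type*} [Lattice L] [BoundedOrder L] (z : L) : Prop :=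
  IsChain (· ≤ ·) (Set.Icc (⊥ : L) z)

/-- An element `z` is a dual cycle if the interval `[z, ⊤]` is a chain. -/
def IsDualCycle {L : Type*} [Lattice L] [BoundedOrder L] (z : L) : Prop :=
  IsChain (· ≤ ·) (Set.Icc z (⊤ : L))

/-- A lattice is semi-primary if every element is a join of cycles and a meet of
dual cycles. -/
def IsSemiPrimary (L : Type*) [Lattice L] [BoundedOrder L] : Prop :=
  ∀ u : L, (∃ s : Finset L, (∀ z ∈ s, IsCycle z) ∧ u = s.sup id) ∧
           (∃ s : Finset L, (∀ z ∈ s, IsDualCycle z) ∧ u = s.inf id)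

/-- A finite family of lattice elements is independent. -/
def IndepFun {L : Type*} [Lattice L] [BoundedOrder L] {n : ℕ} (z : Fin n → L) : Prop :=
  ∀ i, ((Finset.univ.erase i).sup z) ⊓ z i = ⊥

/-- A partition is (represented by) a multiset of positive natural numbers. -/
def IsPartition (μ : Multiset ℕ) : Prop := ∀ p ∈ μ, 0 < p

/-- The `i`-th largest part of a partition (0-indexed, 0 if out of range). -/
def partGet (μ : Multiset ℕ) (i : ℕ) : ℕ := ((μ.sort (· ≤ ·)).reverse).getD i 0

/-- Componentwise order on partitions: `μ ≤ λ` iff `μᵢ ≤ λᵢ` for all `i`. -/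
def PartLE (μ lam : Multiset ℕ) : Prop := ∀ i, partGet μ i ≤ partGet lam i

/-- For `λ = (sⁿ)` and `μ ≤ λ`, the partition `λ − μ = (s − μₙ, …, s − μ₁)`. -/
def partSub (s n : ℕ) (μ : Multiset ℕ) : Multiset ℕ :=
  Multiset.filter (fun x => 0 < x)
    (↑((List.range n).map (fun i => s - partGet μ i)) : Multiset ℕ)

/-- `u` has type `μ`: `u` is a join of independent nonzero cycles whose multiset of
heights equals `μ`. -/
def IsTypeOf {L : Type*} [Lattice L] [BoundedOrder L] (u : L) (μ : Multiset ℕ) : Prop :=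
  ∃ (n : ℕ) (z : Fin n → L), (∀ i, IsCycle (z i)) ∧ (∀ i, z i ≠ ⊥) ∧ IndepFun z ∧
    u = Finset.univ.sup z ∧ (↑(List.ofFn (fun i => ht (z i))) : Multiset ℕ) = μ

/-- The lattice metric `d(u,v) = h(u ∨ v) − h(u ∧ v)`. -/
noncomputable def dLat {L : Type*} [Lattice L] (u v : L) : ℕ := ht (u ⊔ v) - ht (u ⊓ v)

/-- The sphere of radius `r` centered at `u`. -/
def sph {L : Type*} [Lattice L] (u : L) (r : ℕ) : Set L := {v | dLat u v ≤ r}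

/-- The `t`-th layer of the sphere of radius `r` centered at `u`. -/
def sphH {L : Type*} [Lattice L] (u : L) (r t : ℕ) : Set L :=
  {v | dLat u v ≤ r ∧ ht v = t}

/-- The elements of type `μ` in the sphere of radius `r` centered at `u`. -/
def sphT {L : Type*} [Lattice L] [BoundedOrder L] (u : L) (r : ℕ) (μ : Multiset ℕ) :
    Set L := {v | dLat u v ≤ r ∧ IsTypeOf v μ}

/-- A finite semi-primary lattice is down-enumerable. -/
def DownEnum (L : Type*) [Lattice L] [BoundedOrder L] : Prop :=
  ∀ (u v : L) (φ μ : Multiset ℕ), IsTypeOf u φ → IsTypeOf v φ →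
    Nat.card {w : L // IsTypeOf w μ ∧ w ≤ u} = Nat.card {w : L // IsTypeOf w μ ∧ w ≤ v}

/-- A finite semi-primary lattice is up-enumerable. -/
def UpEnum (L : Type*) [Lattice L] [BoundedOrder L] : Prop :=
  ∀ (u v : L) (φ μ : Multiset ℕ), IsTypeOf u φ → IsTypeOf v φ →
    Nat.card {w : L // IsTypeOf w μ ∧ u ≤ w} = Nat.card {w : L // IsTypeOf w μ ∧ v ≤ w}

/-- A lattice is enumerable if it is both down- and up-enumerable. -/
def Enumerable (L : Type*) [Lattice L] [BoundedOrder L] : Prop := DownEnum L ∧ UpEnum L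

/-- `α(φ,μ)`: the number of elements of type `μ` below a (any) element of type `φ`. -/
noncomputable def alphaP (L : Type*) [Lattice L] [BoundedOrder L] (φ μ : Multiset ℕ) : ℕ :=
  sSup {n | ∃ u : L, IsTypeOf u φ ∧ n = Nat.card {w : L // IsTypeOf w μ ∧ w ≤ u}}

/-- `β(φ,μ)`: the number of elements of type `μ` above a (any) element of type `φ`. -/
noncomputable def betaP (L : Type*) [Lattice L] [BoundedOrder L] (φ μ : Multiset ℕ) : ℕ :=
  sSup {n | ∃ u : L, IsTypeOf u φ ∧ n = Nat.card {w : L // IsTypeOf w μ ∧ u ≤ w}}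

/-- `α(μ, r₁, …, rₙ)`: the number of chains `x₁ ≤ ⋯ ≤ xₙ ≤ w` with `h(xᵢ) = rᵢ`,
below a (any) element `w` of type `μ`. -/
noncomputable def alphaChain (L : Type*) [Lattice L] [BoundedOrder L] (μ : Multiset ℕ)
    {n : ℕ} (r : Fin n → ℕ) : ℕ :=
  sSup {m | ∃ w : L, IsTypeOf w μ ∧
    m = Nat.card {x : Fin n → L // (∀ i, ht (x i) = r i) ∧ Monotone x ∧ ∀ i, x i ≤ w}}


section Aux

variable {L : Type*} [Lattice L] [Fintype L]

variable {L : Type*} [Lattice L] [Fintype L]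

lemma myHeightNeTop (x : L) : Order.height x ≠ ⊤ := by
  intro h
  rw [Order.height_eq_top_iff] at h
  obtain ⟨p, hp, hlen⟩ := h (Fintype.card L)
  have := p.length_lt_card
  omega

lemma myCoeHt (x : L) : ((ht x : ℕ) : ℕ∞) = Order.height x := by
  simpa [ht] using ENat.coe_toNat (myHeightNeTop x)

lemma ht_mono {x y : L} (h : x ≤ y) : ht x ≤ ht y := by
  have := Order.height_mono h
  rw [← myCoeHt x, ← myCoeHt y] at this
  exact_mod_cast this

lemma ht_strict {x y : L} (h : x < y) : ht x < ht y := by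
  have := Order.height_strictMono h (lt_of_le_of_ne le_top (myHeightNeTop x))
  rw [← myCoeHt x, ← myCoeHt y] at this
  exact_mod_cast this

lemma exists_lt_ht (y : L) {n : ℕ} (h : n < ht y) : ∃ c < y, ht c = n := by
  have hfin : Order.height y < ⊤ := lt_of_le_of_ne le_top (myHeightNeTop y)
  have h' : (n : ℕ∞) < Order.height y := by
    rw [← myCoeHt y]; exact_mod_cast h
  obtain ⟨c, hc, hhc⟩ := (Order.coe_lt_height_iff hfin).mp h'
  exact ⟨c, hc, by simp [ht, hhc]⟩

lemma exists_covBy_le {x y : L} (h : x < y) : ∃ c, x ⋖ c ∧ c ≤ y := by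
  obtain ⟨c, hc, hmin⟩ := Set.Finite.exists_minimal
    (Set.toFinite {z : L | x < z ∧ z ≤ y}) ⟨y, h, le_rfl⟩
  exact ⟨c, ⟨hc.1, fun w hxw hwc => absurd (hmin ⟨hxw, hwc.le.trans hc.2⟩ hwc.le) hwc.not_ge⟩, hc.2⟩


variable [IsModularLattice L]

lemma ht_covBy : ∀ n : ℕ, ∀ x y : L, ht y = n → x ⋖ y → ht y = ht x + 1 := by
  intro n
  induction n using Nat.strong_induction_on with
  | _ n IH =>
  intro x y hn hxy
  have hx_lt : ht x < ht y := ht_strict hxy.lt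
  obtain ⟨c, hcy, hc⟩ := exists_lt_ht y (n := n - 1) (by omega)
  by_cases hxc : x = c
  · subst hxc; omega
  · have hcovc : c ⋖ y :=
      ⟨hcy, fun z hcz hzy => by
        have h1 := ht_strict hcz
        have h2 := ht_strict hzy
        omega⟩
    have hcx : ¬ c ≤ x := fun hle =>
      hcovc.2 (lt_of_le_of_ne hle (fun h => hxc h.symm)) hxy.lt
    have hsup : x ⊔ c = y := by
      rcases lt_or_eq_of_le (sup_le hxy.lt.le hcy.le) with hlt | heq
      · exact absurd hlt (hxy.2 (left_lt_sup.mpr hcx))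
      · exact heq
    have hzc : x ⊓ c ⋖ c := inf_covBy_of_covBy_sup_left (by rw [hsup]; exact hxy)
    have hzx : x ⊓ c ⋖ x := inf_covBy_of_covBy_sup_right (by rw [hsup]; exact hcovc)
    have hIH : ht c = ht (x ⊓ c) + 1 := IH (n - 1) (by omega) _ _ hc hzc
    have h1 := ht_strict hzx.lt
    have h2 := ht_strict hzc.lt
    omega

lemma ht_grade : ∀ n : ℕ, ∀ a b : L, ht b - ht (a ⊓ b) = n →
    ht (a ⊔ b) + ht (a ⊓ b) = ht a + ht b := by
  intro n
  induction n using Nat.strong_induction_on with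
  | _ n IH =>
  intro a b hn
  by_cases hba : b ≤ a
  · rw [sup_eq_left.mpr hba, inf_eq_right.mpr hba]
  · have hlt : a ⊓ b < b := lt_of_le_of_ne inf_le_right (fun h => hba (by rw [← h]; exact inf_le_left))
    obtain ⟨c, hcov, hcb⟩ := exists_covBy_le hlt
    have hac : a ⊓ c = a ⊓ b :=
      le_antisymm (le_inf inf_le_left ((inf_le_right (a := a)).trans hcb))
        (le_inf inf_le_left hcov.lt.le)
    have hcov' : a ⋖ a ⊔ c := covBy_sup_of_inf_covBy_right (by rw [hac]; exact hcov)
    have key1 : ht (a ⊔ c) = ht a + 1 := ht_covBy _ _ _ rfl hcov'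
    have key2 : (a ⊔ c) ⊓ b = c := by
      rw [sup_comm, sup_inf_assoc_of_le a hcb, sup_eq_left.mpr]
      exact hcov.lt.le
    have key3 : (a ⊔ c) ⊔ b = a ⊔ b := by
      rw [sup_assoc, sup_eq_right.mpr hcb]
    have hhc : ht c = ht (a ⊓ b) + 1 := ht_covBy _ _ _ rfl hcov
    have hmb : ht (a ⊓ b) < ht b := ht_strict hlt
    have hIH : ht ((a ⊔ c) ⊔ b) + ht ((a ⊔ c) ⊓ b) = ht (a ⊔ c) + ht b := by
      apply IH (ht b - ht ((a ⊔ c) ⊓ b)) _ _ _ rfl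
      rw [key2]; omega
    rw [key2, key3] at hIH
    omega

lemma ht_grade' (a b : L) : ht (a ⊔ b) + ht (a ⊓ b) = ht a + ht b :=
  ht_grade _ a b rfl

lemma exists_ht_between : ∀ n : ℕ, ∀ x y : L, ∀ s : ℕ, s - ht x = n → x ≤ y →
    ht x ≤ s → s ≤ ht y → ∃ w, x ≤ w ∧ w ≤ y ∧ ht w = s := by
  intro n
  induction n using Nat.strong_induction_on with
  | _ n IH =>
  intro x y s hn hxy h1 h2
  rcases eq_or_lt_of_le h1 with heq | hlt
  · exact ⟨x, le_rfl, hxy, heq⟩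
  · have hxyne : x < y := lt_of_le_of_ne hxy (fun h => by subst h; omega)
    obtain ⟨c, hcov, hcy⟩ := exists_covBy_le hxyne
    have hc : ht c = ht x + 1 := ht_covBy _ _ _ rfl hcov
    obtain ⟨w, hw1, hw2, hw3⟩ := IH (s - ht c) (by omega) c y s rfl hcy (by omega) h2
    exact ⟨w, hcov.lt.le.trans hw1, hw2, hw3⟩

omit [Fintype L] [IsModularLattice L] in
lemma ht_bot' [OrderBot L] : ht (⊥ : L) = 0 := by
  simp [ht]

end Aux

/-- In a finite modular lattice, let `u₁, u₂` have height `l`, `r ∈ ℕ`,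
and `t` with `|t − l| ≤ r`, `t − l` of the same parity as `r`, and `0 ≤ t ≤ h(1)`. Then
`S(u₁,r) ∩ S(u₂,r) = ∅` iff `S(u₁,r,t) ∩ S(u₂,r,t) = ∅`. -/
theorem stmt11 {L : Type*} [Lattice L] [IsModularLattice L] [BoundedOrder L] [Fintype L]
    (u₁ u₂ : L) (l r t : ℕ) (h₁ : ht u₁ = l) (h₂ : ht u₂ = l)
    (htl : l - r ≤ t) (htu : t ≤ l + r) (hpar : (t + l + r) % 2 = 0)
    (htop : t ≤ ht (⊤ : L)) :
    sph u₁ r ∩ sph u₂ r = ∅ ↔ sphH u₁ r t ∩ sphH u₂ r t = ∅ := by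
  constructor
  · intro h
    rw [Set.eq_empty_iff_forall_notMem] at h ⊢
    intro w hw
    simp only [sphH, Set.mem_inter_iff, Set.mem_setOf_eq] at hw
    exact h w ⟨hw.1.1, hw.2.1⟩
  · intro h
    rw [Set.eq_empty_iff_forall_notMem] at h ⊢
    rintro v ⟨hv1, hv2⟩
    simp only [sph, Set.mem_setOf_eq, dLat] at hv1 hv2
    have g1 : ht (u₁ ⊔ v) + ht (u₁ ⊓ v) = ht u₁ + ht v := ht_grade' _ _
    have g2 : ht (u₂ ⊔ v) + ht (u₂ ⊓ v) = ht u₂ + ht v := ht_grade' _ _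
    have g12 : ht (u₁ ⊔ u₂) + ht (u₁ ⊓ u₂) = ht u₁ + ht u₂ := ht_grade' _ _
    have gJ : ht ((u₁ ⊔ v) ⊔ (u₂ ⊔ v)) + ht ((u₁ ⊔ v) ⊓ (u₂ ⊔ v))
        = ht (u₁ ⊔ v) + ht (u₂ ⊔ v) := ht_grade' _ _
    have mJ : ht (u₁ ⊔ u₂) ≤ ht ((u₁ ⊔ v) ⊔ (u₂ ⊔ v)) :=
      ht_mono (sup_le (le_sup_left.trans le_sup_left) (le_sup_left.trans le_sup_right))
    have mI : ht v ≤ ht ((u₁ ⊔ v) ⊓ (u₂ ⊔ v)) := ht_mono (le_inf le_sup_right le_sup_right)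
    have hml : ht (u₁ ⊓ u₂) ≤ l := h₁ ▸ ht_mono inf_le_left
    have hkr : l ≤ ht (u₁ ⊓ u₂) + r := by omega
    rcases le_or_gt t (ht (u₁ ⊓ u₂)) with hcase | hcase
    · -- low case: w below u₁ ⊓ u₂
      obtain ⟨w, _, hwle, hwht⟩ := exists_ht_between (t - ht (⊥ : L)) ⊥ (u₁ ⊓ u₂) t rfl
        bot_le (by rw [ht_bot']; omega) hcase
      have hw1 : w ≤ u₁ := hwle.trans inf_le_left
      have hw2 : w ≤ u₂ := hwle.trans inf_le_right
      refine h w ⟨⟨?_, hwht⟩, ⟨?_, hwht⟩⟩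
      · show dLat u₁ w ≤ r
        simp only [dLat, sup_eq_left.mpr hw1, inf_eq_right.mpr hw1]
        omega
      · show dLat u₂ w ≤ r
        simp only [dLat, sup_eq_left.mpr hw2, inf_eq_right.mpr hw2]
        omega
    rcases le_or_gt t (ht (u₁ ⊔ u₂)) with hcase2 | hcase2
    · -- middle case
      obtain ⟨a, b, hab1, hab2, hab3⟩ :
          ∃ a b, a + b = t - ht (u₁ ⊓ u₂) ∧ b ≤ a ∧ a ≤ b + 1 :=
        ⟨(t - ht (u₁ ⊓ u₂) + 1) / 2, (t - ht (u₁ ⊓ u₂)) / 2, by omega, by omega, by omega⟩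
      obtain ⟨x₁, hpx1, hx1u, hx1h⟩ := exists_ht_between _ (u₁ ⊓ u₂) u₁
        (ht (u₁ ⊓ u₂) + a) rfl inf_le_left (by omega) (by omega)
      obtain ⟨x₂, hpx2, hx2u, hx2h⟩ := exists_ht_between _ (u₁ ⊓ u₂) u₂
        (ht (u₁ ⊓ u₂) + b) rfl inf_le_right (by omega) (by omega)
      have hinf : x₁ ⊓ x₂ = u₁ ⊓ u₂ :=
        le_antisymm (le_inf (inf_le_left.trans hx1u) (inf_le_right.trans hx2u))
          (le_inf hpx1 hpx2)
      have gw : ht (x₁ ⊔ x₂) + ht (x₁ ⊓ x₂) = ht x₁ + ht x₂ := ht_grade' _ _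
      rw [hinf] at gw
      have hwht : ht (x₁ ⊔ x₂) = t := by omega
      have hinf1 : u₁ ⊓ x₂ = u₁ ⊓ u₂ :=
        le_antisymm (le_inf inf_le_left (inf_le_right.trans hx2u)) (le_inf inf_le_left hpx2)
      have hinf2 : u₂ ⊓ x₁ = u₁ ⊓ u₂ :=
        le_antisymm (le_inf (inf_le_right.trans hx1u) inf_le_left) (le_inf inf_le_right hpx1)
      have g1w : ht (u₁ ⊔ x₂) + ht (u₁ ⊓ x₂) = ht u₁ + ht x₂ := ht_grade' _ _
      have g2w : ht (u₂ ⊔ x₁) + ht (u₂ ⊓ x₁) = ht u₂ + ht x₁ := ht_grade' _ _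
      rw [hinf1] at g1w
      rw [hinf2] at g2w
      have hsup1 : u₁ ⊔ (x₁ ⊔ x₂) = u₁ ⊔ x₂ := by
        rw [← sup_assoc, sup_eq_left.mpr hx1u]
      have hsup2 : u₂ ⊔ (x₁ ⊔ x₂) = u₂ ⊔ x₁ := by
        rw [sup_comm x₁ x₂, ← sup_assoc, sup_eq_left.mpr hx2u]
      have hi1 : ht x₁ ≤ ht (u₁ ⊓ (x₁ ⊔ x₂)) := ht_mono (le_inf hx1u le_sup_left)
      have hi2 : ht x₂ ≤ ht (u₂ ⊓ (x₁ ⊔ x₂)) := ht_mono (le_inf hx2u le_sup_right)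
      refine h (x₁ ⊔ x₂) ⟨⟨?_, hwht⟩, ⟨?_, hwht⟩⟩
      · show dLat u₁ (x₁ ⊔ x₂) ≤ r
        simp only [dLat, hsup1]
        omega
      · show dLat u₂ (x₁ ⊔ x₂) ≤ r
        simp only [dLat, hsup2]
        omega
    · -- high case: w above u₁ ⊔ u₂
      obtain ⟨w, hwge, _, hwht⟩ := exists_ht_between _ (u₁ ⊔ u₂) ⊤ t rfl le_top
        (by omega) htop
      have hw1 : u₁ ≤ w := le_sup_left.trans hwge
      have hw2 : u₂ ≤ w := le_sup_right.trans hwge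
      refine h w ⟨⟨?_, hwht⟩, ⟨?_, hwht⟩⟩
      · show dLat u₁ w ≤ r
        simp only [dLat, sup_eq_right.mpr hw1, inf_eq_left.mpr hw1]
        omega
      · show dLat u₂ w ≤ r
        simp only [dLat, sup_eq_right.mpr hw2, inf_eq_left.mpr hw2]
        omega
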